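/- Let ρ be a density operator on ℂ²⊗ℂ² with correlation matrix T given by T_{jk} = tr(ρ (σ_j ⊗ σ_k)), where σ_j are the Pauli matrices. For any CHSH operator S = A⊗(B+B') + A'⊗(B−B'), where A = a·σ, A' = a'·σ, B = b·σ, B' = b'·σ with a, a', b, b' unit vectors in ℝ³, one has tr(ρ S) ≤ 2√(λ₁ + λ₂), where λ₁ ≥ λ₂ ≥ λ₃ are the eigenvalues of TᵀT. -/

import Mathlib

open Matrix Complex
open scoped Kronecker ComplexOrder

/-- The Pauli matrices `σ₁ = X`, `σ₂ = Y`, `σ₃ = Z`. -/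
noncomputable def pauli : Fin 3 → Matrix (Fin 2) (Fin 2) ℂ
  | 0 => !![0, 1; 1, 0]
  | 1 => !![0, -Complex.I; Complex.I, 0]
  | 2 => !![1, 0; 0, -1]

/-- The qubit observable `v·σ` associated to a vector `v ∈ ℝ³`. -/
noncomputable def obsOf (v : Fin 3 → ℝ) : Matrix (Fin 2) (Fin 2) ℂ :=
  ∑ i, (v i : ℂ) • pauli i

/- ### Auxiliary lemmas -/

lemma sum_kron' {n : Type*} [Fintype n] (A : n → Matrix (Fin 2) (Fin 2) ℂ)
    (B : Matrix (Fin 2) (Fin 2) ℂ) :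
    (∑ i, A i) ⊗ₖ B = ∑ i, (A i) ⊗ₖ B := by
  ext ⟨p, q⟩ ⟨r, s⟩
  simp [kroneckerMap_apply, Matrix.sum_apply, Finset.sum_mul]

lemma kron_sum' {n : Type*} [Fintype n] (A : Matrix (Fin 2) (Fin 2) ℂ)
    (B : n → Matrix (Fin 2) (Fin 2) ℂ) :
    A ⊗ₖ (∑ i, B i) = ∑ i, A ⊗ₖ (B i) := by
  ext ⟨p, q⟩ ⟨r, s⟩
  simp [kroneckerMap_apply, Matrix.sum_apply, Finset.mul_sum]

lemma obsOf_add (u v : Fin 3 → ℝ) : obsOf (u + v) = obsOf u + obsOf v := by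
  simp only [obsOf, Pi.add_apply, Complex.ofReal_add, add_smul, Finset.sum_add_distrib]

lemma obsOf_sub (u v : Fin 3 → ℝ) : obsOf (u - v) = obsOf u - obsOf v := by
  simp only [obsOf, Pi.sub_apply, Complex.ofReal_sub, sub_smul, Finset.sum_sub_distrib]

lemma partA (ρ : Matrix (Fin 2 × Fin 2) (Fin 2 × Fin 2) ℂ)
    (T : Matrix (Fin 3) (Fin 3) ℝ)
    (hT : ∀ j k, T j k = ((ρ * (pauli j ⊗ₖ pauli k)).trace).re)
    (x y : Fin 3 → ℝ) :
    ((ρ * (obsOf x ⊗ₖ obsOf y)).trace).re = ∑ j, ∑ k, x j * y k * T j k := by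
  simp only [obsOf, sum_kron', kron_sum', smul_kronecker, kronecker_smul,
    Matrix.mul_sum, Matrix.mul_smul, trace_sum, trace_smul, smul_smul, smul_eq_mul,
    ← mul_assoc, ← Complex.ofReal_mul, Complex.re_sum, Complex.re_ofReal_mul, hT]
  rw [Finset.sum_comm]
  simp only [Finset.mul_sum]
  exact Finset.sum_congr rfl fun j _ => Finset.sum_congr rfl fun k _ => by ring

lemma partA' (ρ : Matrix (Fin 2 × Fin 2) (Fin 2 × Fin 2) ℂ)
    (T : Matrix (Fin 3) (Fin 3) ℝ)
    (hT : ∀ j k, T j k = ((ρ * (pauli j ⊗ₖ pauli k)).trace).re)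
    (x y : Fin 3 → ℝ) :
    ((ρ * (obsOf x ⊗ₖ obsOf y)).trace).re = x ⬝ᵥ (T *ᵥ y) := by
  rw [partA ρ T hT x y]
  simp only [dotProduct, mulVec, Finset.mul_sum]
  exact Finset.sum_congr rfl fun j _ => Finset.sum_congr rfl fun k _ => by ring

lemma dot_sum_left' {n : Type*} [Fintype n] (f : n → Fin 3 → ℝ) (w : Fin 3 → ℝ) :
    (∑ i, f i) ⬝ᵥ w = ∑ i, f i ⬝ᵥ w := by
  simp only [dotProduct, Finset.sum_apply, Finset.sum_mul]
  rw [Finset.sum_comm]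

lemma dot_sum_right' {n : Type*} [Fintype n] (w : Fin 3 → ℝ) (f : n → Fin 3 → ℝ) :
    w ⬝ᵥ (∑ i, f i) = ∑ i, w ⬝ᵥ f i := by
  simp only [dotProduct, Finset.sum_apply, Finset.mul_sum]
  rw [Finset.sum_comm]

lemma mulVec_sum'' {n : Type*} [Fintype n] (M : Matrix (Fin 3) (Fin 3) ℝ)
    (f : n → Fin 3 → ℝ) :
    M *ᵥ (∑ i, f i) = ∑ i, M *ᵥ f i := by
  ext k
  simp only [mulVec, Finset.sum_apply, dot_sum_right']

/-- The eigenvectors of a hermitian 3×3 real matrix, as plain functions. -/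
noncomputable def vE (M : Matrix (Fin 3) (Fin 3) ℝ) (hM : M.IsHermitian) :
    Fin 3 → Fin 3 → ℝ := fun i k => hM.eigenvectorBasis i k

lemma inner_dot' (u : EuclideanSpace ℝ (Fin 3)) (c : Fin 3 → ℝ) :
    (inner ℝ u (WithLp.toLp 2 c) : ℝ) = (fun k => u k) ⬝ᵥ c := by
  simp [PiLp.inner_apply, dotProduct, RCLike.inner_apply, mul_comm]

lemma expand' (M : Matrix (Fin 3) (Fin 3) ℝ) (hM : M.IsHermitian) (c : Fin 3 → ℝ) :
    c = ∑ i, (vE M hM i ⬝ᵥ c) • vE M hM i := by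
  have h := (hM.eigenvectorBasis.sum_repr' (WithLp.toLp 2 c))
  simp_rw [inner_dot'] at h
  have h2 := congrArg WithLp.ofLp h
  simp only [WithLp.ofLp_sum, WithLp.ofLp_smul] at h2
  exact h2.symm

lemma ortho_dot' (M : Matrix (Fin 3) (Fin 3) ℝ) (hM : M.IsHermitian) (i j : Fin 3) :
    vE M hM i ⬝ᵥ vE M hM j = if i = j then 1 else 0 := by
  have h := hM.eigenvectorBasis.orthonormal
  rw [orthonormal_iff_ite] at h
  rw [← h i j]
  simp [PiLp.inner_apply, dotProduct, vE, RCLike.inner_apply]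
  exact Finset.sum_congr rfl fun _ _ => mul_comm _ _

lemma mulVec_vE (M : Matrix (Fin 3) (Fin 3) ℝ) (hM : M.IsHermitian) (i : Fin 3) :
    M *ᵥ vE M hM i = hM.eigenvalues i • vE M hM i :=
  hM.mulVec_eigenvectorBasis i

lemma dot_coeff' (M : Matrix (Fin 3) (Fin 3) ℝ) (hM : M.IsHermitian) (c c' : Fin 3 → ℝ) :
    c ⬝ᵥ c' = ∑ i, (vE M hM i ⬝ᵥ c) * (vE M hM i ⬝ᵥ c') := by
  conv_lhs => rw [expand' M hM c, expand' M hM c']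
  rw [dot_sum_left']
  simp_rw [dot_sum_right', smul_dotProduct, dotProduct_smul,
    ortho_dot' M hM, smul_eq_mul, mul_ite, mul_one, mul_zero, Finset.sum_ite_eq,
    Finset.mem_univ, if_true]

lemma quad_coeff' (M : Matrix (Fin 3) (Fin 3) ℝ) (hM : M.IsHermitian) (c : Fin 3 → ℝ) :
    c ⬝ᵥ (M *ᵥ c) = ∑ i, hM.eigenvalues i * (vE M hM i ⬝ᵥ c) ^ 2 := by
  conv_lhs => rw [expand' M hM c]
  rw [mulVec_sum'']
  simp_rw [Matrix.mulVec_smul, mulVec_vE, dot_sum_left', dot_sum_right',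
    smul_dotProduct, dotProduct_smul,
    ortho_dot' M hM, smul_eq_mul, mul_ite, mul_one, mul_zero, Finset.sum_ite_eq,
    Finset.mem_univ, if_true]
  exact Finset.sum_congr rfl fun i _ => by ring

lemma lagrange (y z : Fin 3 → ℝ) (hyz : ∑ i, y i * z i = 0) (i : Fin 3) :
    y i ^ 2 * (∑ j, z j ^ 2) + z i ^ 2 * (∑ j, y j ^ 2)
      ≤ (∑ j, y j ^ 2) * (∑ j, z j ^ 2) := by
  simp only [Fin.sum_univ_three] at *
  have f2 : (⟨2, by omega⟩ : Fin 3) = 2 := rfl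
  fin_cases i <;> simp only [Fin.zero_eta, Fin.mk_one, f2, Fin.isValue]
  · have h : y 1 * z 1 + y 2 * z 2 = -(y 0 * z 0) := by linarith
    have h2 : (y 1 * z 1 + y 2 * z 2) ^ 2 = (y 0 * z 0) ^ 2 := by rw [h]; ring
    nlinarith [sq_nonneg (y 1 * z 2 - y 2 * z 1)]
  · have h : y 0 * z 0 + y 2 * z 2 = -(y 1 * z 1) := by linarith
    have h2 : (y 0 * z 0 + y 2 * z 2) ^ 2 = (y 1 * z 1) ^ 2 := by rw [h]; ring
    nlinarith [sq_nonneg (y 0 * z 2 - y 2 * z 0)]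
  · have h : y 0 * z 0 + y 1 * z 1 = -(y 2 * z 2) := by linarith
    have h2 : (y 0 * z 0 + y 1 * z 1) ^ 2 = (y 2 * z 2) ^ 2 := by rw [h]; ring
    nlinarith [sq_nonneg (y 0 * z 1 - y 1 * z 0)]

lemma kyfan (l y z : Fin 3 → ℝ) (hmono : Antitone l) (hl2 : 0 ≤ l 2)
    (hyz : ∑ i, y i * z i = 0) :
    (∑ i, l i * y i ^ 2) * (∑ j, z j ^ 2) + (∑ i, l i * z i ^ 2) * (∑ j, y j ^ 2)
      ≤ (l 0 + l 1) * ((∑ j, y j ^ 2) * (∑ j, z j ^ 2)) := by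
  have h01 : l 1 ≤ l 0 := hmono (by decide : (0:Fin 3) ≤ 1)
  have h12 : l 2 ≤ l 1 := hmono (by decide : (1:Fin 3) ≤ 2)
  have h0 := lagrange y z hyz 0
  have h1 := lagrange y z hyz 1
  have h2 := lagrange y z hyz 2
  have hy0 := sq_nonneg (y 0); have hy1 := sq_nonneg (y 1); have hy2 := sq_nonneg (y 2)
  have hz0 := sq_nonneg (z 0); have hz1 := sq_nonneg (z 1); have hz2 := sq_nonneg (z 2)
  simp only [Fin.sum_univ_three] at *
  nlinarith [mul_le_mul_of_nonneg_left h0 (sub_nonneg.mpr h12),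
    mul_le_mul_of_nonneg_left h1 (sub_nonneg.mpr h12)]

lemma keyfan (l y z : Fin 3 → ℝ) (hmono : Antitone l) (hl2 : 0 ≤ l 2)
    (hyz : ∑ i, y i * z i = 0) (h4 : (∑ i, y i ^ 2) + (∑ i, z i ^ 2) = 4) :
    Real.sqrt (∑ i, l i * y i ^ 2) + Real.sqrt (∑ i, l i * z i ^ 2)
      ≤ 2 * Real.sqrt (l 0 + l 1) := by
  have h01 : l 1 ≤ l 0 := hmono (by decide : (0:Fin 3) ≤ 1)
  have h12 : l 2 ≤ l 1 := hmono (by decide : (1:Fin 3) ≤ 2)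
  have hl1 : 0 ≤ l 1 := le_trans hl2 h12
  have hl0 : 0 ≤ l 0 := le_trans hl1 h01
  have hlnn : ∀ i, 0 ≤ l i := by
    intro i; fin_cases i <;> assumption
  set P := ∑ i, y i ^ 2 with hP
  set Q := ∑ i, z i ^ 2 with hQ
  set A := ∑ i, l i * y i ^ 2 with hA
  set B := ∑ i, l i * z i ^ 2 with hB
  have hPnn : 0 ≤ P := Finset.sum_nonneg fun i _ => sq_nonneg _
  have hQnn : 0 ≤ Q := Finset.sum_nonneg fun i _ => sq_nonneg _
  have hAnn : 0 ≤ A := Finset.sum_nonneg fun i _ => mul_nonneg (hlnn i) (sq_nonneg _)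
  have hBnn : 0 ≤ B := Finset.sum_nonneg fun i _ => mul_nonneg (hlnn i) (sq_nonneg _)
  have hAle : A ≤ l 0 * P := by
    rw [hA, hP, Finset.mul_sum]
    exact Finset.sum_le_sum fun i _ =>
      mul_le_mul_of_nonneg_right (hmono (Fin.zero_le i)) (sq_nonneg _)
  have hBle : B ≤ l 0 * Q := by
    rw [hB, hQ, Finset.mul_sum]
    exact Finset.sum_le_sum fun i _ =>
      mul_le_mul_of_nonneg_right (hmono (Fin.zero_le i)) (sq_nonneg _)
  have hKnn : 0 ≤ l 0 + l 1 := by linarith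
  have h4K : Real.sqrt (4 * (l 0 + l 1)) = 2 * Real.sqrt (l 0 + l 1) := by
    rw [show (4:ℝ) = 2^2 by norm_num, Real.sqrt_mul (by positivity),
      Real.sqrt_sq (by norm_num)]
  rw [← h4K]
  rcases eq_or_lt_of_le hPnn with hP0 | hP0
  · have hyzero : ∀ i, y i = 0 := by
      intro i
      have hz := Finset.sum_eq_zero_iff_of_nonneg
        (fun i (_ : i ∈ Finset.univ) => sq_nonneg (y i))
      rw [← hP] at hz
      exact sq_eq_zero_iff.mp ((hz.mp hP0.symm) i (Finset.mem_univ i))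
    have hA0 : A = 0 := by
      rw [hA]; apply Finset.sum_eq_zero; intro i _; rw [hyzero i]; ring
    have hQ4 : Q = 4 := by linarith
    rw [hA0, Real.sqrt_zero, zero_add]
    apply Real.sqrt_le_sqrt; rw [hQ4] at hBle; linarith
  rcases eq_or_lt_of_le hQnn with hQ0 | hQ0
  · have hzzero : ∀ i, z i = 0 := by
      intro i
      have hz := Finset.sum_eq_zero_iff_of_nonneg
        (fun i (_ : i ∈ Finset.univ) => sq_nonneg (z i))
      rw [← hQ] at hz
      exact sq_eq_zero_iff.mp ((hz.mp hQ0.symm) i (Finset.mem_univ i))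
    have hB0 : B = 0 := by
      rw [hB]; apply Finset.sum_eq_zero; intro i _; rw [hzzero i]; ring
    have hP4 : P = 4 := by linarith
    rw [hB0, Real.sqrt_zero, add_zero]
    apply Real.sqrt_le_sqrt; rw [hP4] at hAle; linarith
  have hkf := kyfan l y z hmono hl2 hyz
  rw [← hA, ← hB, ← hP, ← hQ] at hkf
  set sA := Real.sqrt A with hsA
  set sB := Real.sqrt B with hsB
  have hsA2 : sA ^ 2 = A := Real.sq_sqrt hAnn
  have hsB2 : sB ^ 2 = B := Real.sq_sqrt hBnn
  have hsAnn : 0 ≤ sA := Real.sqrt_nonneg _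
  have hsBnn : 0 ≤ sB := Real.sqrt_nonneg _
  have hPQ : 0 < P * Q := mul_pos hP0 hQ0
  have hAM : 2 * (sA * sB) * (P * Q) ≤ A * Q^2 + B * P^2 := by
    nlinarith [sq_nonneg (sA * Q - sB * P), hsA2, hsB2]
  have h1 : (A + B + 2 * (sA * sB)) * (P * Q) ≤ (A * Q + B * P) * (P + Q) := by
    nlinarith [hAM]
  have h2 : (A * Q + B * P) * (P + Q) ≤ (l 0 + l 1) * (P * Q) * 4 := by
    rw [h4]; linarith [hkf, hPQ.le]
  have h3 : (sA + sB) ^ 2 * (P * Q) ≤ (4 * (l 0 + l 1)) * (P * Q) := by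
    have e : (sA + sB) ^ 2 = A + B + 2 * (sA * sB) := by
      rw [← hsA2, ← hsB2]; ring
    rw [e]; linarith [h1, h2]
  have hsq : (sA + sB) ^ 2 ≤ 4 * (l 0 + l 1) := le_of_mul_le_mul_right h3 hPQ
  calc sA + sB = Real.sqrt ((sA + sB) ^ 2) := (Real.sqrt_sq (by linarith)).symm
    _ ≤ Real.sqrt (4 * (l 0 + l 1)) := Real.sqrt_le_sqrt hsq

lemma cs_bound (x w : Fin 3 → ℝ) (hx : ∑ i, x i ^ 2 = 1) :
    x ⬝ᵥ w ≤ Real.sqrt (∑ k, w k ^ 2) := by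
  have h := Finset.sum_mul_sq_le_sq_mul_sq Finset.univ x w
  rw [hx, one_mul] at h
  calc x ⬝ᵥ w ≤ |x ⬝ᵥ w| := le_abs_self _
    _ = Real.sqrt ((x ⬝ᵥ w) ^ 2) := (Real.sqrt_sq_eq_abs _).symm
    _ ≤ Real.sqrt (∑ k, w k ^ 2) := Real.sqrt_le_sqrt h

/-- Horodecki upper bound: for a two-qubit density operator `ρ` with
correlation matrix `T`, every CHSH operator `S = A⊗(B+B') + A'⊗(B−B')` built from unit
vectors satisfies `tr(ρS) ≤ 2√(λ₁+λ₂)`, with `λ₁ ≥ λ₂ ≥ λ₃` the eigenvalues of `TᵀT`. -/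
theorem stmt3 (ρ : Matrix (Fin 2 × Fin 2) (Fin 2 × Fin 2) ℂ)
    (hρ : ρ.PosSemidef) (htr : ρ.trace = 1)
    (T : Matrix (Fin 3) (Fin 3) ℝ)
    (hT : ∀ j k, T j k = ((ρ * (pauli j ⊗ₖ pauli k)).trace).re)
    (hHerm : (Tᵀ * T).IsHermitian) (lam : Fin 3 → ℝ) (e : Fin 3 ≃ Fin 3)
    (hlam : lam = hHerm.eigenvalues ∘ e) (hmono : Antitone lam)
    (a a' b b' : Fin 3 → ℝ)
    (ha : ∑ i, a i ^ 2 = 1) (ha' : ∑ i, a' i ^ 2 = 1)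
    (hb : ∑ i, b i ^ 2 = 1) (hb' : ∑ i, b' i ^ 2 = 1)
    (S : Matrix (Fin 2 × Fin 2) (Fin 2 × Fin 2) ℂ)
    (hS : S = obsOf a ⊗ₖ (obsOf b + obsOf b') + obsOf a' ⊗ₖ (obsOf b - obsOf b')) :
    ((ρ * S).trace).re ≤ 2 * Real.sqrt (lam 0 + lam 1) := by
  -- Step 1: reduce the trace to dot products with the correlation matrix
  have hre : ((ρ * S).trace).re
      = a ⬝ᵥ (T *ᵥ (b + b')) + a' ⬝ᵥ (T *ᵥ (b - b')) := by
    rw [hS, ← obsOf_add, ← obsOf_sub, Matrix.mul_add, trace_add, Complex.add_re,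
      partA' ρ T hT a (b + b'), partA' ρ T hT a' (b - b')]
  rw [hre]
  -- Step 2: Cauchy–Schwarz on each term
  have hcs1 := cs_bound a (T *ᵥ (b + b')) ha
  have hcs2 := cs_bound a' (T *ᵥ (b - b')) ha'
  -- Step 3: ‖T c‖² as quadratic form of M = TᵀT
  have hquad : ∀ c : Fin 3 → ℝ,
      (∑ k, (T *ᵥ c) k ^ 2)
        = ∑ i, hHerm.eigenvalues i * (vE (Tᵀ * T) hHerm i ⬝ᵥ c) ^ 2 := by
    intro c
    have h1 : (∑ k, (T *ᵥ c) k ^ 2) = (T *ᵥ c) ⬝ᵥ (T *ᵥ c) := by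
      simp [dotProduct, pow_two]
    have h2 : c ⬝ᵥ ((Tᵀ * T) *ᵥ c) = (T *ᵥ c) ⬝ᵥ (T *ᵥ c) := by
      rw [← Matrix.mulVec_mulVec, Matrix.dotProduct_mulVec, Matrix.vecMul_transpose]
    rw [h1, ← h2, quad_coeff' (Tᵀ * T) hHerm c]
  -- Step 4: eigenvalues are nonnegative
  have hTT : (Tᵀ * T).PosSemidef := by
    have hct : Tᴴ = Tᵀ := by
      ext i j; simp [conjTranspose_apply]
    have h := Matrix.posSemidef_conjTranspose_mul_self T
    rwa [hct] at h
  have hl2 : 0 ≤ lam 2 := by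
    rw [hlam]
    exact hTT.eigenvalues_nonneg (e 2)
  -- Step 5: coefficient vectors in the (sorted) eigenbasis
  have horth : (b + b') ⬝ᵥ (b - b') = 0 := by
    simp only [dotProduct, Pi.add_apply, Pi.sub_apply, Fin.sum_univ_three] at hb hb' ⊢
    nlinarith [hb, hb']
  have hyz : ∑ i, (vE (Tᵀ * T) hHerm (e i) ⬝ᵥ (b + b'))
      * (vE (Tᵀ * T) hHerm (e i) ⬝ᵥ (b - b')) = 0 := by
    have h := dot_coeff' (Tᵀ * T) hHerm (b + b') (b - b')
    rw [horth] at h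
    have hre2 := Equiv.sum_comp e
      (fun i => (vE (Tᵀ * T) hHerm i ⬝ᵥ (b + b')) * (vE (Tᵀ * T) hHerm i ⬝ᵥ (b - b')))
    rw [hre2, ← h]
  have hsum4 : (∑ i, (vE (Tᵀ * T) hHerm (e i) ⬝ᵥ (b + b')) ^ 2)
      + (∑ i, (vE (Tᵀ * T) hHerm (e i) ⬝ᵥ (b - b')) ^ 2) = 4 := by
    have h1 := dot_coeff' (Tᵀ * T) hHerm (b + b') (b + b')
    have h2 := dot_coeff' (Tᵀ * T) hHerm (b - b') (b - b')
    have e1 := Equiv.sum_comp e (fun i => (vE (Tᵀ * T) hHerm i ⬝ᵥ (b + b')) ^ 2)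
    have e2 := Equiv.sum_comp e (fun i => (vE (Tᵀ * T) hHerm i ⬝ᵥ (b - b')) ^ 2)
    have hy2 : (∑ i, (vE (Tᵀ * T) hHerm (e i) ⬝ᵥ (b + b')) ^ 2)
        = (b + b') ⬝ᵥ (b + b') := by
      rw [e1, h1]
      exact Finset.sum_congr rfl fun i _ => by ring
    have hz2 : (∑ i, (vE (Tᵀ * T) hHerm (e i) ⬝ᵥ (b - b')) ^ 2)
        = (b - b') ⬝ᵥ (b - b') := by
      rw [e2, h2]
      exact Finset.sum_congr rfl fun i _ => by ring
    rw [hy2, hz2]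
    simp only [dotProduct, Pi.add_apply, Pi.sub_apply, Fin.sum_univ_three] at hb hb' ⊢
    nlinarith [hb, hb']
  -- Step 6: rewrite the quadratic forms with sorted eigenvalues
  have hq1 : (∑ k, (T *ᵥ (b + b')) k ^ 2)
      = ∑ i, lam i * (vE (Tᵀ * T) hHerm (e i) ⬝ᵥ (b + b')) ^ 2 := by
    rw [hquad (b + b'), hlam]
    rw [← Equiv.sum_comp e
      (fun i => hHerm.eigenvalues i * (vE (Tᵀ * T) hHerm i ⬝ᵥ (b + b')) ^ 2)]
    exact Finset.sum_congr rfl fun i _ => by simp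
  have hq2 : (∑ k, (T *ᵥ (b - b')) k ^ 2)
      = ∑ i, lam i * (vE (Tᵀ * T) hHerm (e i) ⬝ᵥ (b - b')) ^ 2 := by
    rw [hquad (b - b'), hlam]
    rw [← Equiv.sum_comp e
      (fun i => hHerm.eigenvalues i * (vE (Tᵀ * T) hHerm i ⬝ᵥ (b - b')) ^ 2)]
    exact Finset.sum_congr rfl fun i _ => by simp
  -- Step 7: apply the key inequality
  have hkey := keyfan lam (fun i => vE (Tᵀ * T) hHerm (e i) ⬝ᵥ (b + b'))
    (fun i => vE (Tᵀ * T) hHerm (e i) ⬝ᵥ (b - b')) hmono hl2 hyz hsum4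
  rw [hq1] at hcs1
  rw [hq2] at hcs2
  linarith [hcs1, hcs2, hkey]
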